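/- Let q ≥ 0, r > 0, Φ′ > 0, 0 ≤ θ < Φ′, p ∈ ℝ and a < 0 be reals. Let W : ℝ → ℝ be nonnegative, Borel measurable, vanish on (−∞,0), and satisfy ∫₀^∞ e^{−Φ′z}·W(z) dz = 1/r. Define Z(x,θ) := e^{θx}·(1 + (q−p)·∫₀ˣ e^{−θz}W(z)dz) and Z(x,Φ′) := e^{Φ′x}·(1 − r·∫₀ˣ e^{−Φ′z}W(z)dz). Then r·∫₀^∞ e^{−Φ′y}·Z(y−a,θ) dy = [r·Z(−a,θ) + (q−p)·Z(−a,Φ′)] / (Φ′−θ). -/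

import Mathlib

open MeasureTheory Filter Set

private lemma intExpIoi {c : ℝ} (hc : 0 < c) (t : ℝ) :
    ∫ y in Set.Ioi t, Real.exp (-c * y) = Real.exp (-c * t) / c := by
  have hderiv : ∀ x ∈ Ici t, HasDerivAt (fun y => -(Real.exp (-c * y) / c))
      (Real.exp (-c * x)) x := by
    intro x _
    have h1 : HasDerivAt (fun y : ℝ => -c * y) (-c) x := by
      simpa using (hasDerivAt_id x).const_mul (-c)
    have h2 := (h1.exp.div_const c).neg
    have e : -(Real.exp (-c * x) * -c / c) = Real.exp (-c * x) := by
      rw [mul_neg, neg_div, neg_neg, mul_div_assoc, div_self hc.ne', mul_one]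
    rw [e] at h2
    exact h2
  have hlim : Tendsto (fun y => -(Real.exp (-c * y) / c)) atTop (nhds 0) := by
    have h1 : Tendsto (fun y : ℝ => c * y) atTop atTop :=
      Tendsto.const_mul_atTop hc tendsto_id
    have h2 : Tendsto (fun y : ℝ => Real.exp (-(c * y))) atTop (nhds 0) :=
      Real.tendsto_exp_neg_atTop_nhds_zero.comp h1
    have : Tendsto (fun y : ℝ => -(Real.exp (-(c * y)) / c)) atTop (nhds (-(0 / c))) :=
      (h2.div_const c).neg
    simpa [neg_mul] using this
  have := integral_Ioi_of_hasDerivAt_of_tendsto' hderiv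
    (exp_neg_integrableOn_Ioi t hc) hlim
  rw [this]; ring

set_option maxHeartbeats 1000000 in
/-- Fubini computation at the core of Lemma B.1(iii):
`r·∫₀^∞ e^{−Φ′y} Z(y−a,θ) dy = Z̃^{(q,r)}(−a,θ)`. -/
theorem stmt_3 (q r Φ' θ p a : ℝ) (hq : 0 ≤ q) (hr : 0 < r) (hΦ' : 0 < Φ')
    (hθ : 0 ≤ θ) (hθΦ' : θ < Φ') (ha : a < 0)
    (W : ℝ → ℝ) (hWnn : ∀ x, 0 ≤ W x) (hWm : Measurable W)
    (hW0 : ∀ x < 0, W x = 0)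
    (hWlap : (∫ z in Set.Ioi (0:ℝ), Real.exp (-Φ' * z) * W z) = 1 / r)
    (Zθ ZΦ' : ℝ → ℝ)
    (hZθ : ∀ x, Zθ x
      = Real.exp (θ * x) * (1 + (q - p) * ∫ z in (0:ℝ)..x, Real.exp (-θ * z) * W z))
    (hZΦ' : ∀ x, ZΦ' x
      = Real.exp (Φ' * x) * (1 - r * ∫ z in (0:ℝ)..x, Real.exp (-Φ' * z) * W z)) :
    r * ∫ y in Set.Ioi (0:ℝ), Real.exp (-Φ' * y) * Zθ (y - a)
      = (r * Zθ (-a) + (q - p) * ZΦ' (-a)) / (Φ' - θ) := by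
  set b : ℝ := -a with hbdef
  have hb : 0 < b := by simp [hbdef]; linarith
  set c : ℝ := Φ' - θ with hcdef
  have hc : 0 < c := by simp [hcdef]; linarith
  set g : ℝ → ℝ := fun z => Real.exp (-θ * z) * W z with hgdef
  set h : ℝ → ℝ := fun z => Real.exp (-Φ' * z) * W z with hhdef
  have hgm : Measurable g := (measurable_id.const_mul (-θ)).exp.mul hWm
  have hhm : Measurable h := (measurable_id.const_mul (-Φ')).exp.mul hWm
  have hgnn : ∀ z, 0 ≤ g z := fun z => mul_nonneg (Real.exp_nonneg _) (hWnn z)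
  have hhnn : ∀ z, 0 ≤ h z := fun z => mul_nonneg (Real.exp_nonneg _) (hWnn z)
  have hgh : ∀ z, g z = Real.exp (c * z) * h z := by
    intro z
    simp only [hgdef, hhdef, ← mul_assoc, ← Real.exp_add]
    ring_nf
    rw [hcdef]; ring_nf
  -- integrability of h on Ioi 0
  have hInth : IntegrableOn h (Ioi (0:ℝ)) := by
    by_contra hcon
    rw [MeasureTheory.integral_undef hcon] at hWlap
    have : (0:ℝ) < 1 / r := by positivity
    rw [← hWlap] at this
    exact lt_irrefl _ this
  -- integrability of g on bounded intervals
  have hIntg : ∀ x : ℝ, IntegrableOn g (Ioc (0:ℝ) x) := by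
    intro x
    apply Integrable.mono'
      ((hInth.mono_set Ioc_subset_Ioi_self).const_mul (Real.exp (c * max x 0)))
      hgm.aestronglyMeasurable
    refine (ae_restrict_iff' measurableSet_Ioc).mpr (.of_forall fun z hz => ?_)
    rw [Real.norm_of_nonneg (hgnn z), hgh z]
    have h1 : Real.exp (c * z) ≤ Real.exp (c * max x 0) :=
      Real.exp_le_exp.mpr (by nlinarith [le_max_left x 0, hz.2, hc.le])
    exact mul_le_mul_of_nonneg_right h1 (hhnn z)
  -- the product function
  set F : ℝ × ℝ → ℝ :=
    fun pr => if 0 < pr.1 ∧ 0 < pr.2 ∧ pr.2 < pr.1 + b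
      then Real.exp (-c * pr.1) * g pr.2 else 0 with hFdef
  have hSmeas : MeasurableSet {pr : ℝ × ℝ | 0 < pr.1 ∧ 0 < pr.2 ∧ pr.2 < pr.1 + b} := by
    apply MeasurableSet.inter
    · exact measurableSet_lt measurable_const measurable_fst
    apply MeasurableSet.inter
    · exact measurableSet_lt measurable_const measurable_snd
    · exact measurableSet_lt measurable_snd (measurable_fst.add_const b)
  have hFm : Measurable F := by
    apply Measurable.ite hSmeas
    · exact ((measurable_fst.const_mul (-c)).exp).mul (hgm.comp measurable_snd)
    · exact measurable_const
  have hFnn : ∀ pr, 0 ≤ F pr := by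
    intro pr
    by_cases hpr : 0 < pr.1 ∧ 0 < pr.2 ∧ pr.2 < pr.1 + b
    · simp only [hFdef, if_pos hpr]
      exact mul_nonneg (Real.exp_nonneg _) (hgnn _)
    · simp only [hFdef, if_neg hpr]; exact le_refl 0
  -- inner integral in z
  have hInner : ∀ y : ℝ, (∫ z, F (y, z))
      = Set.indicator (Ioi (0:ℝ))
          (fun y => Real.exp (-c * y) * ∫ z in Ioo (0:ℝ) (y + b), g z) y := by
    intro y
    by_cases hy : 0 < y
    · rw [Set.indicator_of_mem (mem_Ioi.mpr hy)]
      have heq : (fun z => F (y, z))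
          = Set.indicator (Ioo (0:ℝ) (y + b)) (fun z => Real.exp (-c * y) * g z) := by
        funext z
        by_cases hz : z ∈ Ioo (0:ℝ) (y + b)
        · rw [Set.indicator_of_mem hz]
          exact if_pos ⟨hy, hz.1, hz.2⟩
        · rw [Set.indicator_of_notMem hz]
          refine if_neg fun hcon => hz ⟨hcon.2.1, hcon.2.2⟩
      rw [heq, MeasureTheory.integral_indicator measurableSet_Ioo,
        MeasureTheory.integral_const_mul]
    · rw [Set.indicator_of_notMem (by simpa using hy)]
      have heq : (fun z => F (y, z)) = fun _ => (0:ℝ) := by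
        funext z
        exact if_neg fun hcon => hy hcon.1
      rw [heq, integral_zero]
  -- the z-marginal function
  set φ : ℝ → ℝ := fun z => g z * (Real.exp (-c * max (z - b) 0) / c) with hφdef
  have hφnn : ∀ z, 0 ≤ φ z := fun z => mul_nonneg (hgnn z) (by positivity)
  have hφm : Measurable φ :=
    hgm.mul ((((measurable_id.sub_const b).max measurable_const).const_mul
      (-c)).exp.div_const c)
  have hCol : ∀ z : ℝ, (∫ y, F (y, z)) = Set.indicator (Ioi (0:ℝ)) φ z := by
    intro z
    by_cases hz : 0 < z
    · rw [Set.indicator_of_mem (mem_Ioi.mpr hz)]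
      have heq : (fun y => F (y, z))
          = Set.indicator (Ioi (max (z - b) 0)) (fun y => Real.exp (-c * y) * g z) := by
        funext y
        by_cases hy : y ∈ Ioi (max (z - b) 0)
        · rw [Set.indicator_of_mem hy]
          have hy' := mem_Ioi.mp hy
          refine if_pos ⟨lt_of_le_of_lt (le_max_right _ _) hy', hz, ?_⟩
          have := lt_of_le_of_lt (le_max_left (z - b) 0) hy'
          linarith
        · rw [Set.indicator_of_notMem hy]
          refine if_neg fun hcon => hy ?_
          rw [mem_Ioi, max_lt_iff]
          exact ⟨by linarith [hcon.2.2], hcon.1⟩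
      rw [heq, MeasureTheory.integral_indicator measurableSet_Ioi,
        MeasureTheory.integral_mul_const, intExpIoi hc]
      simp only [hφdef]
      ring
    · rw [Set.indicator_of_notMem (by simpa using hz)]
      have heq : (fun y => F (y, z)) = fun _ => (0:ℝ) := by
        funext y; exact if_neg fun hcon => hz hcon.2.1
      rw [heq, integral_zero]
  -- integrability of the z-marginal
  have hbd : Integrable (Set.indicator (Ioi (0:ℝ))
      (fun z => Real.exp (c * b) / c * h z)) volume :=
    (integrable_indicator_iff measurableSet_Ioi).mpr (hInth.const_mul _)
  have hφIoiInt : Integrable (Set.indicator (Ioi (0:ℝ)) φ) volume := by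
    refine hbd.mono' ((hφm.indicator measurableSet_Ioi).aestronglyMeasurable)
      (.of_forall fun z => ?_)
    by_cases hz : z ∈ Ioi (0:ℝ)
    · rw [Set.indicator_of_mem hz, Set.indicator_of_mem hz, Real.norm_of_nonneg (hφnn z)]
      have hexp : Real.exp (-c * max (z - b) 0) ≤ Real.exp (-c * (z - b)) :=
        Real.exp_le_exp.mpr (by nlinarith [le_max_left (z - b) (0:ℝ)])
      have e1 : Real.exp (c * z) * Real.exp (-c * (z - b)) = Real.exp (c * b) := by
        rw [← Real.exp_add]; ring_nf
      calc φ z ≤ g z * (Real.exp (-c * (z - b)) / c) := by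
            simp only [hφdef]
            exact mul_le_mul_of_nonneg_left ((div_le_div_iff_of_pos_right hc).mpr hexp) (hgnn z)
        _ = Real.exp (c * b) / c * h z := by rw [hgh z, ← e1]; ring
    · rw [Set.indicator_of_notMem hz, Set.indicator_of_notMem hz]; simp
  -- integrability of F on the product
  have hFint : Integrable F ((volume : Measure ℝ).prod volume) := by
    rw [integrable_prod_iff' hFm.aestronglyMeasurable]
    constructor
    · refine .of_forall fun z => ?_
      by_cases hz : 0 < z
      · have heq : (fun y => F (y, z))
            = Set.indicator (Ioi (max (z - b) 0)) (fun y => Real.exp (-c * y) * g z) := by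
          funext y
          by_cases hy : y ∈ Ioi (max (z - b) 0)
          · rw [Set.indicator_of_mem hy]
            have hy' := mem_Ioi.mp hy
            refine if_pos ⟨lt_of_le_of_lt (le_max_right _ _) hy', hz, ?_⟩
            have := lt_of_le_of_lt (le_max_left (z - b) 0) hy'
            linarith
          · rw [Set.indicator_of_notMem hy]
            refine if_neg fun hcon => hy ?_
            rw [mem_Ioi, max_lt_iff]
            exact ⟨by linarith [hcon.2.2], hcon.1⟩
        rw [heq]
        exact (integrable_indicator_iff measurableSet_Ioi).mpr
          ((exp_neg_integrableOn_Ioi _ hc).mul_const _)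
      · have heq : (fun y => F (y, z)) = fun _ => (0:ℝ) := by
          funext y; exact if_neg fun hcon => hz hcon.2.1
        rw [heq]; exact integrable_zero _ _ _
    · have heq : (fun z => ∫ y, ‖F (y, z)‖) = fun z => Set.indicator (Ioi (0:ℝ)) φ z := by
        funext z
        rw [← hCol z]
        congr 1
        funext y
        exact Real.norm_of_nonneg (hFnn _)
      rw [heq]
      exact hφIoiInt
  -- Fubini
  have hswap : (∫ y, ∫ z, F (y, z)) = ∫ z, ∫ y, F (y, z) :=
    MeasureTheory.integral_integral_swap (f := fun y z => F (y, z)) hFint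
  have hIφ : IntegrableOn φ (Ioi (0:ℝ)) :=
    (integrable_indicator_iff measurableSet_Ioi).mp hφIoiInt
  -- value of the z-marginal integral
  have hIoib : ∫ z in Ioi b, h z = 1 / r - ∫ z in Ioc (0:ℝ) b, h z := by
    have hu := setIntegral_union (f := h) (μ := volume) Ioc_disjoint_Ioi_same
      measurableSet_Ioi (hInth.mono_set Ioc_subset_Ioi_self)
      (hInth.mono_set (Ioi_subset_Ioi hb.le))
    rw [Ioc_union_Ioi_eq_Ioi hb.le, hWlap] at hu
    linarith
  have hsplit : ∫ z in Ioi (0:ℝ), φ z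
      = (∫ z in Ioc (0:ℝ) b, g z) * (1 / c)
        + (1 / r - ∫ z in Ioc (0:ℝ) b, h z) * (Real.exp (c * b) / c) := by
    rw [← Ioc_union_Ioi_eq_Ioi hb.le (a := (0:ℝ)),
      setIntegral_union Ioc_disjoint_Ioi_same measurableSet_Ioi
        (hIφ.mono_set Ioc_subset_Ioi_self) (hIφ.mono_set (Ioi_subset_Ioi hb.le)),
      ← hIoib]
    congr 1
    · rw [← MeasureTheory.integral_mul_const]
      refine setIntegral_congr_fun measurableSet_Ioc fun z hz => ?_
      have hm : max (z - b) 0 = 0 := max_eq_right (by linarith [hz.2])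
      simp only [hφdef, hm, mul_zero, Real.exp_zero]
    · rw [← MeasureTheory.integral_mul_const]
      refine setIntegral_congr_fun measurableSet_Ioi fun z hz => ?_
      have hm : max (z - b) 0 = z - b := max_eq_left (by linarith [mem_Ioi.mp hz, hb])
      have e1 : Real.exp (c * z) * Real.exp (-c * (z - b)) = Real.exp (c * b) := by
        rw [← Real.exp_add]; ring_nf
      simp only [hφdef, hm]
      rw [hgh z, ← e1]
      ring
  -- value of the double integral
  have hS : (∫ y in Ioi (0:ℝ), Real.exp (-c * y) * ∫ z in Ioo (0:ℝ) (y + b), g z)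
      = (∫ z in Ioc (0:ℝ) b, g z) * (1 / c)
        + (1 / r - ∫ z in Ioc (0:ℝ) b, h z) * (Real.exp (c * b) / c) := by
    have h1 : (∫ y, ∫ z, F (y, z))
        = ∫ y in Ioi (0:ℝ), Real.exp (-c * y) * ∫ z in Ioo (0:ℝ) (y + b), g z := by
      simp_rw [hInner]
      exact MeasureTheory.integral_indicator measurableSet_Ioi
    have h2 : (∫ z, ∫ y, F (y, z)) = ∫ z in Ioi (0:ℝ), φ z := by
      simp_rw [hCol]
      exact MeasureTheory.integral_indicator measurableSet_Ioi
    rw [← h1, hswap, h2, hsplit]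
  -- integrability of the y-marginal
  have hKint : IntegrableOn
      (fun y => Real.exp (-c * y) * ∫ z in Ioo (0:ℝ) (y + b), g z) (Ioi (0:ℝ)) := by
    have h3 : Integrable (fun y => ∫ z, F (y, z)) volume := hFint.integral_prod_left
    rw [funext hInner] at h3
    exact (integrable_indicator_iff measurableSet_Ioi).mp h3
  -- rewrite the main integrand
  have hintegrand : EqOn (fun y => Real.exp (-Φ' * y) * Zθ (y - a))
      (fun y => Real.exp (θ * b) * Real.exp (-c * y)
        + ((q - p) * Real.exp (θ * b))
          * (Real.exp (-c * y) * ∫ z in Ioo (0:ℝ) (y + b), g z)) (Ioi (0:ℝ)) := by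
    intro y hy
    have hy' := mem_Ioi.mp hy
    have h1 : y - a = y + b := by rw [hbdef]; ring
    have h2 : (∫ z in (0:ℝ)..(y + b), g z) = ∫ z in Ioo (0:ℝ) (y + b), g z := by
      rw [intervalIntegral.integral_of_le (by linarith : (0:ℝ) ≤ y + b)]
      exact MeasureTheory.integral_Ioc_eq_integral_Ioo
    simp only [hZθ, h1, h2]
    have e : Real.exp (-Φ' * y) * Real.exp (θ * (y + b))
        = Real.exp (θ * b) * Real.exp (-c * y) := by
      rw [← Real.exp_add, ← Real.exp_add]
      congr 1
      rw [hcdef]; ring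
    calc Real.exp (-Φ' * y) * (Real.exp (θ * (y + b))
          * (1 + (q - p) * ∫ z in Ioo (0:ℝ) (y + b), g z))
        = Real.exp (-Φ' * y) * Real.exp (θ * (y + b))
          * (1 + (q - p) * ∫ z in Ioo (0:ℝ) (y + b), g z) := by ring
      _ = _ := by rw [e]; ring
  rw [setIntegral_congr_fun measurableSet_Ioi hintegrand,
    MeasureTheory.integral_add ((exp_neg_integrableOn_Ioi 0 hc).const_mul _)
      (hKint.const_mul _),
    MeasureTheory.integral_const_mul, MeasureTheory.integral_const_mul,
    intExpIoi hc 0, hS]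
  -- right-hand side
  have hIb : (∫ z in (0:ℝ)..b, g z) = ∫ z in Ioc (0:ℝ) b, g z :=
    intervalIntegral.integral_of_le hb.le
  have hJb : (∫ z in (0:ℝ)..b, h z) = ∫ z in Ioc (0:ℝ) b, h z :=
    intervalIntegral.integral_of_le hb.le
  rw [hZθ b, hZΦ' b, hIb, hJb]
  have e2 : Real.exp (Φ' * b) = Real.exp (θ * b) * Real.exp (c * b) := by
    rw [← Real.exp_add]
    congr 1
    rw [hcdef]; ring
  rw [e2]
  have hexp0 : Real.exp (-c * 0) = 1 := by rw [mul_zero, Real.exp_zero]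
  rw [hexp0]
  field_simp
  ring
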